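/- Let M, N ∈ ℂ^{n×n} be such that M* N + N* M is positive semidefinite (where * denotes conjugate transpose), and suppose there exist U, V ∈ ℂ^{n×n} with U M + V N = I. Then M + N is nonsingular. -/

import Mathlib

open Matrix
open scoped ComplexOrder

theorem stmt_2 (n : ℕ) (M N U V : Matrix (Fin n) (Fin n) ℂ)
    (hpsd : (Mᴴ * N + Nᴴ * M).PosSemidef)
    (hUV : U * M + V * N = 1) : IsUnit (M + N) := by
  rw [Matrix.isUnit_iff_isUnit_det, isUnit_iff_ne_zero]
  intro hdet
  obtain ⟨z, hz, hzero⟩ := (Matrix.exists_mulVec_eq_zero_iff).2 hdet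
  rw [add_mulVec] at hzero
  have hb : N *ᵥ z = -(M *ᵥ z) := eq_neg_of_add_eq_zero_right hzero
  have key : ∀ (A : Matrix (Fin n) (Fin n) ℂ) (w : Fin n → ℂ),
      star z ⬝ᵥ (Aᴴ *ᵥ w) = star (A *ᵥ z) ⬝ᵥ w := by
    intro A w
    rw [dotProduct_mulVec, ← star_mulVec]
  have hq := hpsd.dotProduct_mulVec_nonneg z
  have hexp : star z ⬝ᵥ ((Mᴴ * N + Nᴴ * M) *ᵥ z)
      = -(2 * (star (M *ᵥ z) ⬝ᵥ (M *ᵥ z))) := by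
    rw [add_mulVec, dotProduct_add, ← mulVec_mulVec, ← mulVec_mulVec, key, key, hb]
    simp only [dotProduct_neg, neg_dotProduct, star_neg]
    ring
  rw [hexp] at hq
  set c := star (M *ᵥ z) ⬝ᵥ (M *ᵥ z) with hc
  have hnn : (0:ℂ) ≤ c := dotProduct_star_self_nonneg _
  have h1 : 2 * c ≤ 0 := by rwa [neg_nonneg] at hq
  have h2 : (0:ℂ) ≤ 2 * c := mul_nonneg (by norm_num) hnn
  have hc0 : c = 0 := by
    have : 2 * c = 0 := le_antisymm h1 h2
    have := mul_eq_zero.mp this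
    rcases this with h | h
    · norm_num at h
    · exact h
  have hMz : M *ᵥ z = 0 := dotProduct_star_self_eq_zero.mp hc0
  have hNz : N *ᵥ z = 0 := by rw [hb, hMz, neg_zero]
  apply hz
  have h : (U * M + V * N) *ᵥ z = z := by rw [hUV, one_mulVec]
  rw [add_mulVec, ← mulVec_mulVec, ← mulVec_mulVec, hMz, hNz, mulVec_zero, mulVec_zero,
    add_zero] at h
  exact h.symm
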